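/- arXiv:0708.3533 — 2 statements merged into one kernel-verified Lean document; each statement's English description precedes it below -/
import Mathlib

section
/- Assume the MFS setup with eigenvalue bounds (H_s) and boundary-data decay |v̂(m)| ≤ C_v·ρ^{−|m|} for all m ∈ ℤ with ρ > 1. Let α̂ ∈ ℂ^N be the window-interpolating coefficients α̂_m := (2π/N)·v̂(m)/ŝ(m) for −N/2 < m ≤ N/2. Then there exists a constant C > 0, depending on c_s, C_s, C_v, R, ρ, ŝ(0), v̂(0) but not on N, such that the aliasing error E_u² := ∑_{m∉(−N/2,N/2]} |(N/(2π))·ŝ(m)·α̂_{⟨m⟩_N}|² satisfies E_u² ≤ C·R^{−2N}·∑_{−N/2<n≤N/2} (R²/ρ)^{2|n|}. -/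
open scoped BigOperators ENNReal NNReal

noncomputable section

/-- The unique representative of `m` modulo `N` lying in the window `(-N/2, N/2]`. -/
def winRep (N : ℕ) (m : ℤ) : ℤ := (m + (N : ℤ) / 2 - 1) % (N : ℤ) - ((N : ℤ) / 2 - 1)

/-- The index window `(-N/2, N/2]` as a finite set of integers. -/
def window (N : ℕ) : Finset ℤ := Finset.Icc (-(N : ℤ) / 2 + 1) ((N : ℤ) / 2)

/-- The norm `|α̂|` of a coefficient vector indexed by the window. -/
def coefNorm (N : ℕ) (a : ℤ → ℂ) : ℝ := Real.sqrt (∑ k ∈ window N, ‖a k‖ ^ 2)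

/-- The boundary error norm
`t(α̂) = (2π·∑_{m∈ℤ} |(N/(2π))·ŝ(m)·α̂_{⟨m⟩_N} − v̂(m)|²)^{1/2}`, valued in `[0,∞]`. -/
def tErr (N : ℕ) (s v a : ℤ → ℂ) : ℝ≥0∞ :=
  (ENNReal.ofReal (2 * Real.pi) *
    ∑' m : ℤ, (‖((N : ℂ) / (2 * (Real.pi : ℂ))) * s m * a (winRep N m) - v m‖₊ : ℝ≥0∞) ^ 2)
    ^ (1 / 2 : ℝ)

/-! ### Auxiliary lemmas -/

lemma mem_window' {N : ℕ} {m : ℤ} : m ∈ window N ↔ -(N:ℤ) / 2 + 1 ≤ m ∧ m ≤ (N:ℤ)/2 := by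
  simp [window, Finset.mem_Icc]

lemma winRep_mem {N : ℕ} (hN : (N:ℤ) % 2 = 0) (hN2 : 2 ≤ (N:ℤ)) (m : ℤ) :
    winRep N m ∈ window N := by
  have h1 := Int.emod_nonneg (m + (N:ℤ)/2 - 1) (by omega : (N:ℤ) ≠ 0)
  have h2 := Int.emod_lt_of_pos (m + (N:ℤ)/2 - 1) (by omega : (0:ℤ) < N)
  rw [mem_window']; unfold winRep; omega

lemma winRep_dvd {N : ℕ} (m : ℤ) : (N:ℤ) ∣ (m - winRep N m) := by
  refine ⟨(m + (N:ℤ)/2 - 1) / N, ?_⟩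
  have := Int.emod_def (m + (N:ℤ)/2 - 1) (N:ℤ)
  unfold winRep; omega

lemma winRep_of_mem {N : ℕ} (hN : (N:ℤ) % 2 = 0) (hN2 : 2 ≤ (N:ℤ)) {m : ℤ} (hm : m ∈ window N) :
    winRep N m = m := by
  rw [mem_window'] at hm
  have : (m + (N:ℤ)/2 - 1) % (N:ℤ) = m + (N:ℤ)/2 - 1 :=
    Int.emod_eq_of_lt (by omega) (by omega)
  unfold winRep; omega

lemma winRep_add_mul {N : ℕ} (m j : ℤ) : winRep N (m + j * N) = winRep N m := by
  unfold winRep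
  congr 1
  have h : m + j * (N:ℤ) + (N:ℤ)/2 - 1 = (m + (N:ℤ)/2 - 1) + j * N := by ring
  rw [h, Int.add_mul_emod_self_right]

lemma not_mem_window {N : ℕ} (hN : (N:ℤ) % 2 = 0) (hN2 : 2 ≤ (N:ℤ)) {k j : ℤ}
    (hk : k ∈ window N) (hj : j ≠ 0) : k + j * N ∉ window N := by
  rw [mem_window'] at hk ⊢
  rcases lt_or_gt_of_ne hj with h | h
  · have : j * (N:ℤ) ≤ -N := by nlinarith
    omega
  · have : (N:ℤ) ≤ j * N := by nlinarith
    omega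

/-- Decomposition of the integers outside the window as `window × (ℤ ∖ {0})`. -/
def winEquiv (N : ℕ) (hN : (N:ℤ) % 2 = 0) (hN2 : 2 ≤ (N:ℤ)) :
    ((window N) × {j : ℤ // j ≠ 0}) ≃ {m : ℤ // m ∉ window N} where
  toFun p := ⟨p.1.1 + p.2.1 * N, not_mem_window hN hN2 p.1.2 p.2.2⟩
  invFun m := (⟨winRep N m.1, winRep_mem hN hN2 m.1⟩,
    ⟨(m.1 - winRep N m.1) / N, by
      intro h
      have hd := winRep_dvd (N := N) m.1
      have h0 : m.1 - winRep N m.1 = 0 := by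
        have := Int.ediv_mul_cancel hd
        rw [h] at this; omega
      have : m.1 ∈ window N := by
        have he : m.1 = winRep N m.1 := by omega
        rw [he]; exact winRep_mem hN hN2 _
      exact m.2 this⟩)
  left_inv p := by
    ext
    · simp only
      rw [winRep_add_mul, winRep_of_mem hN hN2 p.1.2]
    · simp only
      rw [winRep_add_mul, winRep_of_mem hN hN2 p.1.2]
      have : p.1.1 + p.2.1 * N - p.1.1 = p.2.1 * N := by ring
      rw [this, Int.mul_ediv_cancel _ (by omega : (N:ℤ) ≠ 0)]
  right_inv m := by
    ext
    simp only
    rw [Int.ediv_mul_cancel (winRep_dvd m.1)]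
    omega

lemma key_bound {R ρ cs Cs Cv : ℝ} (hR : 1 < R) (hρ : 1 < ρ)
    (hcs : 0 < cs) (hcsCs : cs ≤ Cs) (hCv : 0 < Cv)
    {s v : ℤ → ℂ} (hs0 : s 0 ≠ 0)
    (hsl : ∀ m : ℤ, m ≠ 0 → cs / |(m : ℝ)| * R ^ (-|m|) ≤ ‖s m‖)
    (hsu : ∀ m : ℤ, m ≠ 0 → ‖s m‖ ≤ Cs / |(m : ℝ)| * R ^ (-|m|))
    (hv : ∀ m : ℤ, ‖v m‖ ≤ Cv * ρ ^ (-|m|))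
    {k m : ℤ} (hkm : |k| ≤ |m|) (hm : m ≠ 0) :
    ‖s m‖ * ‖v k‖ / ‖s k‖ ≤ (Cs * Cv * max cs⁻¹ ‖s 0‖⁻¹) * R ^ (|k| - |m|) * ρ ^ (-|k|) := by
  have hR0 : (0:ℝ) < R := by linarith
  have hρ0 : (0:ℝ) < ρ := by linarith
  have hCs : (0:ℝ) < Cs := lt_of_lt_of_le hcs hcsCs
  have hs0n : (0:ℝ) < ‖s 0‖ := norm_pos_iff.mpr hs0
  have hmr : (1:ℝ) ≤ |(m:ℝ)| := by
    rw [← Int.cast_abs]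
    exact_mod_cast Int.one_le_abs hm
  rcases eq_or_ne k 0 with rfl | hk
  · simp only [abs_zero, zpow_zero, mul_one, zero_sub, neg_zero]
    have h1 : ‖s m‖ * ‖v 0‖ / ‖s 0‖
        ≤ (Cs / |(m:ℝ)| * R ^ (-|m|)) * (Cv * ρ ^ (-|(0:ℤ)|)) / ‖s 0‖ := by
      gcongr
      · exact hsu m hm
      · exact hv 0
    refine h1.trans ?_
    simp only [abs_zero, neg_zero, zpow_zero, mul_one]
    have h2 : Cs / |(m:ℝ)| ≤ Cs := by
      rw [div_le_iff₀ (by linarith)]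
      nlinarith
    calc Cs / |(m:ℝ)| * R ^ (-|m|) * Cv / ‖s 0‖
        = (Cs / |(m:ℝ)|) * Cv * ‖s 0‖⁻¹ * R ^ (-|m|) := by ring
      _ ≤ Cs * Cv * max cs⁻¹ ‖s 0‖⁻¹ * R ^ (-|m|) := by
          gcongr <;> first
            | exact h2
            | exact le_max_right _ _
  · have hkr : (1:ℝ) ≤ |(k:ℝ)| := by
      rw [← Int.cast_abs]
      exact_mod_cast Int.one_le_abs hk
    have hden : (0:ℝ) < cs / |(k:ℝ)| * R ^ (-|k|) := by positivity
    have h1 : ‖s m‖ * ‖v k‖ / ‖s k‖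
        ≤ (Cs / |(m:ℝ)| * R ^ (-|m|)) * (Cv * ρ ^ (-|k|)) / (cs / |(k:ℝ)| * R ^ (-|k|)) := by
      gcongr
      · exact hsu m hm
      · exact hv k
      · exact hsl k hk
    refine h1.trans ?_
    have heq : (Cs / |(m:ℝ)| * R ^ (-|m|)) * (Cv * ρ ^ (-|k|)) / (cs / |(k:ℝ)| * R ^ (-|k|))
        = (Cs * Cv / cs) * (|(k:ℝ)| / |(m:ℝ)|) * R ^ (|k| - |m|) * ρ ^ (-|k|) := by
      rw [zpow_sub₀ (ne_of_gt hR0)]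
      have hRk : R ^ (|k|:ℤ) ≠ 0 := ne_of_gt (zpow_pos hR0 _)
      have hRm : R ^ (|m|:ℤ) ≠ 0 := ne_of_gt (zpow_pos hR0 _)
      rw [zpow_neg, zpow_neg, zpow_neg]
      have hρk : ρ ^ (|k|:ℤ) ≠ 0 := ne_of_gt (zpow_pos hρ0 _)
      field_simp
    rw [heq]
    have h4 : |(k:ℝ)| / |(m:ℝ)| ≤ 1 := by
      rw [div_le_one (by linarith)]
      rw [← Int.cast_abs, ← Int.cast_abs]
      exact_mod_cast hkm
    calc (Cs * Cv / cs) * (|(k:ℝ)| / |(m:ℝ)|) * R ^ (|k| - |m|) * ρ ^ (-|k|)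
        ≤ (Cs * Cv * cs⁻¹) * 1 * R ^ (|k| - |m|) * ρ ^ (-|k|) := by
          rw [div_eq_mul_inv]
          gcongr <;> first
            | exact h4
            | positivity
      _ ≤ (Cs * Cv * max cs⁻¹ ‖s 0‖⁻¹) * R ^ (|k| - |m|) * ρ ^ (-|k|) := by
          rw [mul_one]
          gcongr
          exact le_max_left _ _

lemma sq_bound {R ρ : ℝ} (hR : 1 < R) (hρ0 : (0:ℝ) < ρ) {A : ℝ} (hA : 0 ≤ A)
    (N : ℕ) {k m j : ℤ} (hjN : |j| * (N:ℤ) ≤ |m| + |k|) (n : ℕ) (hn : (n:ℤ) = |j| - 1) :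
    (A * R ^ (|k| - |m|) * ρ ^ (-|k|)) ^ 2
      ≤ A ^ 2 * ((R ^ 2 / ρ) ^ (2 * |k|) * R ^ (-2 * (N:ℤ))) * (R ^ (-2 * (N:ℤ))) ^ n := by
  have hR0 : (0:ℝ) < R := by linarith
  have e1 : (A * R ^ (|k| - |m|) * ρ ^ (-|k|)) ^ 2
      = A ^ 2 * R ^ (2 * (|k| - |m|)) * ρ ^ (-(2 * |k|)) := by
    rw [mul_pow, mul_pow]
    congr 1
    · congr 1
      rw [← zpow_natCast (R ^ (|k| - |m|)) 2, ← zpow_mul]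
      congr 1; push_cast; ring
    · rw [← zpow_natCast (ρ ^ (-|k|)) 2, ← zpow_mul]
      congr 1; push_cast; ring
  have e2 : A ^ 2 * ((R ^ 2 / ρ) ^ (2 * |k|) * R ^ (-2 * (N:ℤ))) * (R ^ (-2 * (N:ℤ))) ^ n
      = A ^ 2 * R ^ (4 * |k| - 2 * (N:ℤ) - 2 * (N:ℤ) * (n:ℤ)) * ρ ^ (-(2 * |k|)) := by
    rw [div_zpow, ← zpow_natCast R 2, ← zpow_mul,
      ← zpow_natCast (R ^ (-2 * (N:ℤ))) n, ← zpow_mul]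
    rw [div_eq_mul_inv, ← zpow_neg]
    rw [show ((2:ℕ):ℤ) * (2 * |k|) = 4 * |k| by push_cast; ring]
    have e3 : R ^ (4 * |k| - 2 * (N:ℤ) - 2 * (N:ℤ) * (n:ℤ))
        = R ^ (4 * |k|) * R ^ (-2 * (N:ℤ)) * R ^ (-2 * (N:ℤ) * (n:ℤ)) := by
      rw [← zpow_add₀ (ne_of_gt hR0), ← zpow_add₀ (ne_of_gt hR0)]
      congr 1; ring
    rw [e3]; ring
  rw [e1, e2]
  have hexp : 2 * (|k| - |m|) ≤ 4 * |k| - 2 * (N:ℤ) - 2 * (N:ℤ) * (n:ℤ) := by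
    have h2 : 2 * (N:ℤ) * (n:ℤ) = 2 * (|j| * N) - 2 * N := by rw [hn]; ring
    linarith
  gcongr
  · exact le_of_lt hR

lemma geom_tail (q : ℝ≥0∞) :
    ∑' j : {j : ℤ // j ≠ 0}, q ^ (j.1.natAbs - 1) ≤ 2 * (1 - q)⁻¹ := by
  have hinj : Function.Injective
      (fun j : {j : ℤ // j ≠ 0} => ((decide (0 < j.1), j.1.natAbs - 1) : Bool × ℕ)) := by
    intro j1 j2 h
    rw [Prod.mk.injEq] at h
    have hb : (0 < j1.1) ↔ (0 < j2.1) := by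
      have := h.1
      simpa [decide_eq_decide] using this
    have h1 := j1.2
    have h2 := j2.2
    have := h.2
    ext
    omega
  calc ∑' j : {j : ℤ // j ≠ 0}, q ^ (j.1.natAbs - 1)
      ≤ ∑' p : Bool × ℕ, q ^ p.2 :=
        ENNReal.tsum_comp_le_tsum_of_injective hinj (fun p => q ^ p.2)
    _ = ∑' b : Bool, ∑' i : ℕ, q ^ i := ENNReal.tsum_prod (f := fun _ i => q ^ i)
    _ = (1 - q)⁻¹ + (1 - q)⁻¹ := by rw [tsum_bool, ENNReal.tsum_geometric]
    _ = 2 * (1 - q)⁻¹ := by rw [two_mul]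

set_option maxHeartbeats 1000000 in
/-- Bound on the aliasing error `E_u²` for the window-interpolating coefficients
`α̂_m = (2π/N)·v̂(m)/ŝ(m)`:
`E_u² ≤ C·R^{-2N}·∑_{−N/2<n≤N/2} (R²/ρ)^{2|n|}` with `C` independent of `N`. -/
theorem mfs_aliasing_error_bound
    (R ρ cs Cs Cv : ℝ) (hR : 1 < R) (hρ : 1 < ρ)
    (hcs : 0 < cs) (hcsCs : cs ≤ Cs) (hCv : 0 < Cv)
    (s v : ℤ → ℂ)
    (hs0 : s 0 ≠ 0) (hs0' : ‖s 0‖ ≤ Cs)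
    (hsl : ∀ m : ℤ, m ≠ 0 → cs / |(m : ℝ)| * R ^ (-|m|) ≤ ‖s m‖)
    (hsu : ∀ m : ℤ, m ≠ 0 → ‖s m‖ ≤ Cs / |(m : ℝ)| * R ^ (-|m|))
    (hv : ∀ m : ℤ, ‖v m‖ ≤ Cv * ρ ^ (-|m|)) :
    ∃ C : ℝ, 0 < C ∧ ∀ N : ℕ, Even N → 2 ≤ N →
      ∑' m : {m : ℤ // m ∉ window N},
          (‖((N : ℂ) / (2 * (Real.pi : ℂ))) * s (m : ℤ) *
              ((2 * (Real.pi : ℂ)) / (N : ℂ) * v (winRep N (m : ℤ)) / s (winRep N (m : ℤ)))‖₊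
            : ℝ≥0∞) ^ 2
        ≤ ENNReal.ofReal
            (C * R ^ (-2 * (N : ℤ)) * ∑ n ∈ window N, (R ^ 2 / ρ) ^ (2 * |n|)) := by
  have hR0 : (0:ℝ) < R := by linarith
  have hρ0 : (0:ℝ) < ρ := by linarith
  have hCs : (0:ℝ) < Cs := lt_of_lt_of_le hcs hcsCs
  have hs0n : (0:ℝ) < ‖s 0‖ := norm_pos_iff.mpr hs0
  set A : ℝ := Cs * Cv * max cs⁻¹ ‖s 0‖⁻¹ with hA
  have hApos : 0 < A := by
    have hmx : (0:ℝ) < max cs⁻¹ ‖s 0‖⁻¹ := lt_max_of_lt_left (by positivity)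
    positivity
  have hR2 : R ^ (-2:ℤ) < 1 := by
    rw [zpow_neg, inv_lt_one_iff₀]
    right
    exact one_lt_zpow₀ hR (by norm_num)
  have hR2' : (0:ℝ) < 1 - R ^ (-2:ℤ) := by linarith
  set D : ℝ := 2 * (1 - R ^ (-2:ℤ))⁻¹ with hD
  have hDpos : 0 < D := by positivity
  refine ⟨A ^ 2 * D, by positivity, ?_⟩
  intro N hNe hN2
  have hNmod : (N:ℤ) % 2 = 0 := by
    have := Nat.even_iff.mp hNe
    omega
  have hN2' : 2 ≤ (N:ℤ) := by exact_mod_cast hN2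
  set G : ℤ → ℝ≥0∞ := fun x =>
    (‖((N : ℂ) / (2 * (Real.pi : ℂ))) * s x *
        ((2 * (Real.pi : ℂ)) / (N : ℂ) * v (winRep N x) / s (winRep N x))‖₊ : ℝ≥0∞) ^ 2
    with hG
  -- the per-window-element bound
  have perk : ∀ k ∈ window N,
      (∑' j : {j : ℤ // j ≠ 0}, G (k + j.1 * N))
        ≤ ENNReal.ofReal (A ^ 2 * D * R ^ (-2 * (N:ℤ)) * (R ^ 2 / ρ) ^ (2 * |k|)) := by
    intro k hk
    set r : ℝ := R ^ (-2 * (N:ℤ)) with hr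
    have hrpos : 0 < r := zpow_pos hR0 _
    have hrle : r ≤ R ^ (-2:ℤ) := by
      rw [hr]
      exact zpow_le_zpow_right₀ (le_of_lt hR) (by omega)
    set q : ℝ≥0∞ := ENNReal.ofReal r with hq
    set c : ℝ≥0∞ := ENNReal.ofReal (A ^ 2 * ((R ^ 2 / ρ) ^ (2 * |k|) * r)) with hc
    have hpt : ∀ j : {j : ℤ // j ≠ 0}, G (k + j.1 * N) ≤ c * q ^ (j.1.natAbs - 1) := by
      intro j
      set m : ℤ := k + j.1 * N with hm
      have hj0 : j.1 ≠ 0 := j.2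
      have hj1 : 1 ≤ |j.1| := Int.one_le_abs hj0
      have habs : |j.1| * (N:ℤ) ≤ |m| + |k| := by
        calc |j.1| * (N:ℤ) = |j.1 * N| := by
              rw [abs_mul, abs_of_nonneg (by positivity : (0:ℤ) ≤ (N:ℤ))]
          _ = |m + (-k)| := by congr 1; rw [hm]; ring
          _ ≤ |m| + |(-k)| := abs_add_le _ _
          _ = |m| + |k| := by rw [abs_neg]
      have hNle : (N:ℤ) ≤ |j.1| * N :=
        le_mul_of_one_le_left (by positivity) hj1
      have hk2 : 2 * |k| ≤ (N:ℤ) := by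
        rw [mem_window'] at hk
        have hkabs : |k| ≤ (N:ℤ)/2 := abs_le.mpr ⟨by omega, by omega⟩
        omega
      have hkm : |k| ≤ |m| := by linarith
      have hm1 : 1 ≤ |m| := by linarith
      have hm0 : m ≠ 0 := by
        intro h
        rw [h, abs_zero] at hm1
        omega
      have hwin : winRep N m = k := by
        rw [hm, winRep_add_mul, winRep_of_mem hNmod hN2' hk]
      have hπ : ((Real.pi : ℂ)) ≠ 0 := by
        exact_mod_cast Real.pi_ne_zero
      have hNc : (N : ℂ) ≠ 0 := by
        exact_mod_cast (by omega : (N:ℤ) ≠ 0)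
      have hfac : ((N : ℂ) / (2 * (Real.pi : ℂ))) * ((2 * (Real.pi : ℂ)) / (N : ℂ)) = 1 := by
        field_simp
      have hz : ((N : ℂ) / (2 * (Real.pi : ℂ))) * s m *
          ((2 * (Real.pi : ℂ)) / (N : ℂ) * v k / s k) = s m * v k / s k := by
        calc ((N : ℂ) / (2 * (Real.pi : ℂ))) * s m *
              ((2 * (Real.pi : ℂ)) / (N : ℂ) * v k / s k)
            = (((N : ℂ) / (2 * (Real.pi : ℂ))) * ((2 * (Real.pi : ℂ)) / (N : ℂ)))
              * (s m * v k / s k) := by ring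
          _ = s m * v k / s k := by rw [hfac, one_mul]
      have hnorm : ‖s m * v k / s k‖ = ‖s m‖ * ‖v k‖ / ‖s k‖ := by
        rw [norm_div, norm_mul]
      have hb : ‖s m * v k / s k‖ ≤ A * R ^ (|k| - |m|) * ρ ^ (-|k|) := by
        rw [hnorm]
        exact key_bound hR hρ hcs hcsCs hCv hs0 hsl hsu hv hkm hm0
      have hbsq : ‖s m * v k / s k‖ ^ 2
          ≤ A ^ 2 * ((R ^ 2 / ρ) ^ (2 * |k|) * r) * r ^ (j.1.natAbs - 1) := by
        have h1 : ‖s m * v k / s k‖ ^ 2 ≤ (A * R ^ (|k| - |m|) * ρ ^ (-|k|)) ^ 2 := by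
          have := norm_nonneg (s m * v k / s k)
          nlinarith [zpow_pos hR0 (|k| - |m|), zpow_pos hρ0 (-|k|), hApos]
        refine h1.trans ?_
        refine sq_bound hR hρ0 (le_of_lt hApos) N habs (j.1.natAbs - 1) ?_
        rw [Int.abs_eq_natAbs]
        omega
      calc G (k + j.1 * N)
          = ENNReal.ofReal (‖s m * v k / s k‖ ^ 2) := by
            rw [hG]
            simp only [← hm, hwin, hz]
            rw [ENNReal.ofReal_pow (norm_nonneg _), ← coe_nnnorm, ENNReal.ofReal_coe_nnreal]
        _ ≤ ENNReal.ofReal (A ^ 2 * ((R ^ 2 / ρ) ^ (2 * |k|) * r) * r ^ (j.1.natAbs - 1)) :=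
            ENNReal.ofReal_le_ofReal hbsq
        _ = c * q ^ (j.1.natAbs - 1) := by
            rw [hc, hq, ENNReal.ofReal_mul (by positivity),
              ENNReal.ofReal_pow (le_of_lt hrpos)]
    calc (∑' j : {j : ℤ // j ≠ 0}, G (k + j.1 * N))
        ≤ ∑' j : {j : ℤ // j ≠ 0}, c * q ^ (j.1.natAbs - 1) :=
          ENNReal.tsum_le_tsum hpt
      _ = c * ∑' j : {j : ℤ // j ≠ 0}, q ^ (j.1.natAbs - 1) := ENNReal.tsum_mul_left
      _ ≤ c * (2 * (1 - q)⁻¹) := by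
          gcongr
          exact geom_tail q
      _ ≤ c * ENNReal.ofReal D := by
          gcongr
          have h1q : (1 : ℝ≥0∞) - q = ENNReal.ofReal (1 - r) := by
            rw [hq, ← ENNReal.ofReal_one, ← ENNReal.ofReal_sub _ (le_of_lt hrpos)]
          have hinv : (ENNReal.ofReal (1 - r))⁻¹ = ENNReal.ofReal (1 - r)⁻¹ := by
            rw [ENNReal.ofReal_inv_of_pos (by linarith)]
          calc 2 * (1 - q)⁻¹ = ENNReal.ofReal 2 * ENNReal.ofReal (1 - r)⁻¹ := by
                rw [h1q, hinv]
                norm_num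
            _ = ENNReal.ofReal (2 * (1 - r)⁻¹) := (ENNReal.ofReal_mul (by norm_num)).symm
            _ ≤ ENNReal.ofReal D := by
                apply ENNReal.ofReal_le_ofReal
                rw [hD]
                have : (1 - r)⁻¹ ≤ (1 - R ^ (-2:ℤ))⁻¹ := by
                  apply inv_anti₀ hR2'
                  linarith
                linarith
      _ = ENNReal.ofReal (A ^ 2 * D * R ^ (-2 * (N:ℤ)) * (R ^ 2 / ρ) ^ (2 * |k|)) := by
          rw [hc, ← ENNReal.ofReal_mul (by positivity)]
          congr 1
          rw [hr]
          ring
  -- assemble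
  calc ∑' m : {m : ℤ // m ∉ window N}, G m.1
      = ∑' p : ((window N) × {j : ℤ // j ≠ 0}), G ((winEquiv N hNmod hN2') p).1 :=
        (Equiv.tsum_eq (winEquiv N hNmod hN2') (fun m => G m.1)).symm
    _ = ∑' p : ((window N) × {j : ℤ // j ≠ 0}), G (p.1.1 + p.2.1 * N) := by
        apply tsum_congr
        intro p
        simp only [winEquiv, Equiv.coe_fn_mk]
    _ = ∑' k : (window N), ∑' j : {j : ℤ // j ≠ 0}, G (k.1 + j.1 * N) :=
        ENNReal.tsum_prod' (f := fun p : ((window N) × {j : ℤ // j ≠ 0}) => G (p.1.1 + p.2.1 * N))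
    _ = ∑ k ∈ window N, ∑' j : {j : ℤ // j ≠ 0}, G (k + j.1 * N) :=
        Finset.tsum_subtype (window N) (fun k => ∑' j : {j : ℤ // j ≠ 0}, G (k + j.1 * N))
    _ ≤ ∑ k ∈ window N,
          ENNReal.ofReal (A ^ 2 * D * R ^ (-2 * (N:ℤ)) * (R ^ 2 / ρ) ^ (2 * |k|)) :=
        Finset.sum_le_sum perk
    _ = ENNReal.ofReal (A ^ 2 * D * R ^ (-2 * (N:ℤ)) * ∑ n ∈ window N, (R ^ 2 / ρ) ^ (2 * |n|)) := by
        rw [Finset.mul_sum, ENNReal.ofReal_sum_of_nonneg (fun i _ => by positivity)]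
end
end

section
/- Assume the MFS setup with eigenvalue bounds (H_s) and boundary-data decay |v̂(m)| ≤ C_v·ρ^{−|m|} for all m ∈ ℤ, and suppose 1 < R < ρ. Let α̂ ∈ ℂ^N be given by α̂_m := (2π/N)·v̂(m)/ŝ(m) for −N/2 < m ≤ N/2. Then there is a constant C > 0, independent of N, such that |α̂_m| ≤ C·(R/ρ)^{|m|} for all m ≠ 0 in the window, and consequently the norms |α̂| are bounded by a constant independent of N. -/
open scoped BigOperators ENNReal NNReal

noncomputable section

/-- When `1 < R < ρ`, the window-interpolating coefficients `α̂_m = (2π/N)·v̂(m)/ŝ(m)`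
decay like `(R/ρ)^{|m|}`, hence their norms `|α̂|` are bounded uniformly in `N`. -/
theorem mfs_diagonal_coefficients_bounded
    (R ρ cs Cs Cv : ℝ) (hR : 1 < R) (hRρ : R < ρ)
    (hcs : 0 < cs) (hcsCs : cs ≤ Cs) (hCv : 0 < Cv)
    (s v : ℤ → ℂ)
    (hs0 : s 0 ≠ 0) (hs0' : ‖s 0‖ ≤ Cs)
    (hsl : ∀ m : ℤ, m ≠ 0 → cs / |(m : ℝ)| * R ^ (-|m|) ≤ ‖s m‖)
    (hsu : ∀ m : ℤ, m ≠ 0 → ‖s m‖ ≤ Cs / |(m : ℝ)| * R ^ (-|m|))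
    (hv : ∀ m : ℤ, ‖v m‖ ≤ Cv * ρ ^ (-|m|)) :
    ∃ C C' : ℝ, 0 < C ∧ 0 < C' ∧ ∀ N : ℕ, Even N → 2 ≤ N →
      (∀ m ∈ window N, m ≠ 0 →
        ‖(2 * (Real.pi : ℂ)) / (N : ℂ) * v m / s m‖ ≤ C * (R / ρ) ^ |m|) ∧
      coefNorm N (fun m => (2 * (Real.pi : ℂ)) / (N : ℂ) * v m / s m) ≤ C' := by
  have hπ := Real.pi_pos
  have hR0 : (0:ℝ) < R := by linarith
  have hρ0 : (0:ℝ) < ρ := by linarith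
  have hq0 : (0:ℝ) < R / ρ := div_pos hR0 hρ0
  have hq1 : R / ρ < 1 := (div_lt_one hρ0).mpr hRρ
  have hs0pos : (0:ℝ) < ‖s 0‖ := norm_pos_iff.mpr hs0
  set C : ℝ := Real.pi * Cv / cs with hCdef
  set A : ℝ := Real.pi * Cv / ‖s 0‖ with hAdef
  have hCpos : 0 < C := by positivity
  have hApos : 0 < A := by positivity
  set C0 : ℝ := max C A with hC0
  have hC0pos : 0 < C0 := lt_max_of_lt_left hCpos
  -- summability of the square geometric series on ℤ
  set q : ℝ := (R / ρ) ^ 2 with hqdef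
  have hq0' : 0 ≤ q := by positivity
  have hq1' : q < 1 := by
    rw [hqdef, sq]; nlinarith
  have hsum : Summable (fun k : ℤ => q ^ k.natAbs) := by
    apply Summable.of_nat_of_neg
    · simpa using summable_geometric_of_lt_one hq0' hq1'
    · simpa using summable_geometric_of_lt_one hq0' hq1'
  set S : ℝ := ∑' k : ℤ, q ^ k.natAbs with hSdef
  have hS0 : 0 ≤ S := tsum_nonneg fun k => by positivity
  refine ⟨C, Real.sqrt (C0 ^ 2 * S) + 1, hCpos, by positivity, ?_⟩
  intro N hNeven hN2
  have hN0 : (0:ℝ) < (N:ℝ) := by positivity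
  have hNC : (N:ℂ) ≠ 0 := by exact_mod_cast Nat.cast_ne_zero.mpr (by omega)
  -- norm of the coefficient
  have hnorm : ∀ m : ℤ, ‖(2 * (Real.pi : ℂ)) / (N : ℂ) * v m / s m‖
      = 2 * Real.pi / (N:ℝ) * ‖v m‖ / ‖s m‖ := by
    intro m
    simp [norm_div, norm_mul, Complex.norm_real, abs_of_pos hπ, Complex.norm_natCast]
  -- the pointwise bound for nonzero m
  have hpoint : ∀ m ∈ window N, m ≠ 0 →
      ‖(2 * (Real.pi : ℂ)) / (N : ℂ) * v m / s m‖ ≤ C * (R / ρ) ^ |m| := by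
    intro m hm hm0
    rw [window, Finset.mem_Icc] at hm
    set n : ℕ := m.natAbs with hn
    have hn1 : 1 ≤ n := by omega
    have h2n : 2 * (n:ℝ) ≤ (N:ℝ) := by
      have hNdvd : (2:ℤ) ∣ (N:ℤ) := by
        obtain ⟨r, hr⟩ := hNeven; exact ⟨r, by push_cast [hr]; ring⟩
      have : 2 * (n:ℤ) ≤ (N:ℤ) := by omega
      exact_mod_cast this
    have habs : |m| = (n:ℤ) := Int.abs_eq_natAbs m
    have habsR : |(m:ℝ)| = (n:ℝ) := by
      rw [← Int.cast_abs, habs]; norm_num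
    have hRn : R ^ (-|m|) = (R ^ n)⁻¹ := by rw [habs, zpow_neg, zpow_natCast]
    have hρn : ρ ^ (-|m|) = (ρ ^ n)⁻¹ := by rw [habs, zpow_neg, zpow_natCast]
    have hqn : (R / ρ) ^ |m| = R ^ n / ρ ^ n := by rw [habs, zpow_natCast, div_pow]
    have hslow : cs / (n:ℝ) * (R ^ n)⁻¹ ≤ ‖s m‖ := by
      have := hsl m hm0; rwa [habsR, hRn] at this
    have hsden : (0:ℝ) < cs / (n:ℝ) * (R ^ n)⁻¹ := by
      have : (0:ℝ) < (n:ℝ) := by exact_mod_cast hn1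
      positivity
    have hvb : ‖v m‖ ≤ Cv * (ρ ^ n)⁻¹ := by have := hv m; rwa [hρn] at this
    rw [hnorm m, hqn]
    calc 2 * Real.pi / (N:ℝ) * ‖v m‖ / ‖s m‖
        ≤ 2 * Real.pi / (N:ℝ) * (Cv * (ρ ^ n)⁻¹) / (cs / (n:ℝ) * (R ^ n)⁻¹) := by
          gcongr
      _ = (2 * (n:ℝ) / (N:ℝ)) * (C * (R ^ n / ρ ^ n)) := by
          have hn0 : ((n:ℝ)) ≠ 0 := by positivity
          field_simp [hCdef]
          rw [hCdef]; field_simp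
      _ ≤ 1 * (C * (R ^ n / ρ ^ n)) := by
          gcongr
          rw [div_le_one hN0]; linarith
      _ = C * (R ^ n / ρ ^ n) := one_mul _
  refine ⟨hpoint, ?_⟩
  -- uniform bound over the whole window, including 0
  have hpt0 : ∀ m ∈ window N, ‖(2 * (Real.pi : ℂ)) / (N : ℂ) * v m / s m‖
      ≤ C0 * (R / ρ) ^ m.natAbs := by
    intro m hm
    by_cases hm0 : m = 0
    · subst hm0
      simp only [Int.natAbs_zero, pow_zero, mul_one]
      rw [hnorm 0]
      have hv0 : ‖v 0‖ ≤ Cv := by have := hv 0; simpa using this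
      have h2N : 2 * Real.pi / (N:ℝ) ≤ Real.pi := by
        rw [div_le_iff₀ hN0]
        have : (2:ℝ) ≤ (N:ℝ) := by exact_mod_cast hN2
        nlinarith
      have : 2 * Real.pi / (N:ℝ) * ‖v 0‖ / ‖s 0‖ ≤ Real.pi * Cv / ‖s 0‖ := by
        gcongr
      exact this.trans (le_max_right C A)
    · have := hpoint m hm hm0
      have habs : (R / ρ) ^ |m| = (R / ρ) ^ m.natAbs := by
        rw [Int.abs_eq_natAbs, zpow_natCast]
      rw [habs] at this
      refine this.trans ?_
      gcongr
      exact le_max_left C A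
  -- sum the squares
  have hsumle : ∑ k ∈ window N, ‖(2 * (Real.pi : ℂ)) / (N : ℂ) * v k / s k‖ ^ 2
      ≤ C0 ^ 2 * S := by
    calc ∑ k ∈ window N, ‖(2 * (Real.pi : ℂ)) / (N : ℂ) * v k / s k‖ ^ 2
        ≤ ∑ k ∈ window N, C0 ^ 2 * q ^ k.natAbs := by
          apply Finset.sum_le_sum
          intro k hk
          have h := hpt0 k hk
          have : ‖(2 * (Real.pi : ℂ)) / (N : ℂ) * v k / s k‖ ^ 2
              ≤ (C0 * (R / ρ) ^ k.natAbs) ^ 2 := by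
            apply pow_le_pow_left₀ (norm_nonneg _) h
          calc ‖(2 * (Real.pi : ℂ)) / (N : ℂ) * v k / s k‖ ^ 2
              ≤ (C0 * (R / ρ) ^ k.natAbs) ^ 2 := this
            _ = C0 ^ 2 * q ^ k.natAbs := by
                rw [mul_pow, hqdef, ← pow_mul, ← pow_mul, Nat.mul_comm]
      _ ≤ C0 ^ 2 * S := by
          rw [← Finset.mul_sum]
          gcongr
          exact Summable.sum_le_tsum _ (fun k _ => by positivity) hsum
  have : coefNorm N (fun m => (2 * (Real.pi : ℂ)) / (N : ℂ) * v m / s m)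
      ≤ Real.sqrt (C0 ^ 2 * S) := Real.sqrt_le_sqrt hsumle
  linarith
end
end
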